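/- Let $V>0$, $\chi>0$, $a<b$, and let $f\colon[0,V]\to\mathbb{R}$ be $C^1$ with $f(0)=0$, $f(V)=\chi$, $a\le f'\le b$. If $\int_0^V f(x)\,dx = -\tfrac{a}{2}V^2 - \tfrac{(\chi-aV)^2}{2(b-a)} + V\chi$, then, with $\delta=\frac{\chi-aV}{b-a}$, $f(x)=bx$ for $x\in[0,\delta]$ and $f(x)=a(x-V)+\chi$ for $x\in[\delta,V]$. -/

import Mathlib

open Real Set intervalIntegral

theorem extremal_lemma_equality (V χ a b : ℝ) (hV : 0 < V) (hχ : 0 < χ) (hab : a < b)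
    (f f' : ℝ → ℝ)
    (hderiv : ∀ x ∈ Set.Icc 0 V, HasDerivAt f (f' x) x)
    (hcont : ContinuousOn f' (Set.Icc 0 V))
    (hf0 : f 0 = 0) (hfV : f V = χ)
    (hbound : ∀ x ∈ Set.Icc 0 V, a ≤ f' x ∧ f' x ≤ b)
    (heq : ∫ x in (0:ℝ)..V, f x = -a/2 * V^2 - (χ - a*V)^2 / (2*(b-a)) + V * χ) :
    (∀ x ∈ Set.Icc 0 ((χ - a*V)/(b-a)), f x = b * x) ∧
    (∀ x ∈ Set.Icc ((χ - a*V)/(b-a)) V, f x = a * (x - V) + χ) := by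
  set δ := (χ - a*V)/(b-a) with hδdef
  have hba : (0:ℝ) < b - a := sub_pos.2 hab
  -- FTC on subintervals
  have hftc : ∀ x ∈ Set.Icc (0:ℝ) V, ∀ y ∈ Set.Icc (0:ℝ) V, x ≤ y →
      ∫ t in x..y, f' t = f y - f x := by
    intro x hx y hy hxy
    have hsub : Set.uIcc x y ⊆ Set.Icc 0 V := by
      rw [Set.uIcc_of_le hxy]
      exact Set.Icc_subset_Icc hx.1 hy.2
    exact intervalIntegral.integral_eq_sub_of_hasDerivAt
      (fun t ht => hderiv t (hsub ht))
      ((hcont.mono hsub).intervalIntegrable)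
  have hInt : ∀ x ∈ Set.Icc (0:ℝ) V, ∀ y ∈ Set.Icc (0:ℝ) V, x ≤ y →
      IntervalIntegrable f' MeasureTheory.volume x y := by
    intro x hx y hy hxy
    have hsub : Set.uIcc x y ⊆ Set.Icc 0 V := by
      rw [Set.uIcc_of_le hxy]
      exact Set.Icc_subset_Icc hx.1 hy.2
    exact (hcont.mono hsub).intervalIntegrable
  have hVmem : V ∈ Set.Icc (0:ℝ) V := ⟨hV.le, le_refl V⟩
  have h0mem : (0:ℝ) ∈ Set.Icc (0:ℝ) V := ⟨le_refl 0, hV.le⟩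
  -- upper bound 1 : f x ≤ b * x
  have hub : ∀ x ∈ Set.Icc (0:ℝ) V, f x ≤ b * x := by
    intro x hx
    have h1 : ∫ t in (0:ℝ)..x, f' t ≤ ∫ t in (0:ℝ)..x, b := by
      apply intervalIntegral.integral_mono_on hx.1 (hInt 0 h0mem x hx hx.1)
        intervalIntegrable_const
      intro t ht
      exact (hbound t ⟨ht.1, le_trans ht.2 hx.2⟩).2
    rw [hftc 0 h0mem x hx hx.1, hf0, intervalIntegral.integral_const] at h1
    simpa [mul_comm] using h1
  -- upper bound 2 : f x ≤ a * (x - V) + χ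
  have hua : ∀ x ∈ Set.Icc (0:ℝ) V, f x ≤ a * (x - V) + χ := by
    intro x hx
    have h1 : ∫ t in x..V, a ≤ ∫ t in x..V, f' t := by
      apply intervalIntegral.integral_mono_on hx.2 intervalIntegrable_const
        (hInt x hx V hVmem hx.2)
      intro t ht
      exact (hbound t ⟨le_trans hx.1 ht.1, ht.2⟩).1
    rw [hftc x hx V hVmem hx.2, hfV, intervalIntegral.integral_const] at h1
    simp only [smul_eq_mul] at h1
    nlinarith [h1]
  have hδ0 : 0 ≤ δ := by
    have := hua 0 h0mem
    rw [hf0] at this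
    apply div_nonneg _ hba.le
    nlinarith
  have hδV : δ ≤ V := by
    have := hub V hVmem
    rw [hfV] at this
    rw [hδdef, div_le_iff₀ hba]
    nlinarith
  have hδkey : δ * (b - a) = χ - a * V := by
    rw [hδdef, div_mul_cancel₀ _ hba.ne']
  clear hδdef
  clear_value δ
  -- the extremal function
  set F : ℝ → ℝ := fun x => min (b * x) (a * (x - V) + χ) with hFdef
  have hFle : ∀ x ∈ Set.Icc (0:ℝ) V, f x ≤ F x := fun x hx =>
    le_min (hub x hx) (hua x hx)
  have hFcont : ContinuousOn F (Set.Icc 0 V) :=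
    ((continuous_const.mul continuous_id).min
      ((continuous_const.mul (continuous_id.sub continuous_const)).add
        continuous_const)).continuousOn
  -- F equals b*x on [0, δ]
  have hF1 : ∀ x ∈ Set.Icc (0:ℝ) δ, F x = b * x := by
    intro x hx
    apply min_eq_left
    nlinarith [hx.2, hx.1]
  have hF2 : ∀ x ∈ Set.Icc δ V, F x = a * (x - V) + χ := by
    intro x hx
    apply min_eq_right
    nlinarith [hx.1]
  -- integral of F
  have hFint : ∫ x in (0:ℝ)..V, F x = -a/2 * V^2 - (χ - a*V)^2 / (2*(b-a)) + V * χ := by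
    have hsplit : (∫ x in (0:ℝ)..δ, F x) + (∫ x in δ..V, F x) = ∫ x in (0:ℝ)..V, F x := by
      apply intervalIntegral.integral_add_adjacent_intervals
      · exact (hFcont.mono (by rw [Set.uIcc_of_le hδ0]; exact Set.Icc_subset_Icc le_rfl hδV)).intervalIntegrable
      · exact (hFcont.mono (by rw [Set.uIcc_of_le hδV]; exact Set.Icc_subset_Icc hδ0 le_rfl)).intervalIntegrable
    have h1 : ∫ x in (0:ℝ)..δ, F x = b * δ^2 / 2 := by
      rw [intervalIntegral.integral_congr (g := fun x => b * x)
        (by rw [Set.uIcc_of_le hδ0]; exact fun x hx => hF1 x hx)]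
      rw [intervalIntegral.integral_const_mul, integral_id]
      ring
    have h2 : ∫ x in δ..V, F x = a * ((V^2 - δ^2)/2 - V*(V - δ)) + χ * (V - δ) := by
      rw [intervalIntegral.integral_congr (g := fun x => a * (x - V) + χ)
        (by rw [Set.uIcc_of_le hδV]; exact fun x hx => hF2 x hx)]
      have : ∀ x : ℝ, a * (x - V) + χ = a * x + (χ - a * V) := fun x => by ring
      simp_rw [this]
      rw [intervalIntegral.integral_add ((by fun_prop : Continuous fun x : ℝ => a * x).intervalIntegrable _ _)
        intervalIntegrable_const]
      rw [intervalIntegral.integral_const_mul, integral_id, intervalIntegral.integral_const]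
      simp only [smul_eq_mul]
      ring
    have hthis : (χ - a*V)^2 / (2*(b-a)) = δ * (χ - a * V) / 2 := by
      rw [← hδkey]; field_simp
    rw [← hsplit, h1, h2, hthis]
    linear_combination (δ/2) * hδkey
  -- f = F on [0, V]
  have hfF : ∀ x ∈ Set.Icc (0:ℝ) V, f x = F x := by
    by_contra hc
    push_neg at hc
    obtain ⟨c, hc, hne⟩ := hc
    have hlt : (∫ x in (0:ℝ)..V, f x) < ∫ x in (0:ℝ)..V, F x := by
      apply intervalIntegral.integral_lt_integral_of_continuousOn_of_le_of_exists_lt hV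
      · exact fun x hx => (hderiv x hx).continuousAt.continuousWithinAt
      · exact hFcont
      · exact fun x hx => hFle x ⟨hx.1.le, hx.2⟩
      · exact ⟨c, hc, lt_of_le_of_ne (hFle c hc) hne⟩
    rw [heq, hFint] at hlt
    exact lt_irrefl _ hlt
  constructor
  · intro x hx
    have hx' : x ∈ Set.Icc (0:ℝ) V := ⟨hx.1, le_trans hx.2 hδV⟩
    rw [hfF x hx', hF1 x hx]
  · intro x hx
    have hx' : x ∈ Set.Icc (0:ℝ) V := ⟨le_trans hδ0 hx.1, hx.2⟩
    rw [hfF x hx', hF2 x hx]
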